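/- The function I₃ = 1/u₁ + ln(u₂/(2uu₂ - u₁²)) is a first integral of the vector field Z = ∂_x + u₁∂_u + u₂∂_{u₁} + (u₂²(u₁² - 2uu₂)/u₁⁴)∂_{u₂} on the region where u₁ ≠ 0 and u₂/(2uu₂ - u₁²) > 0; that is, Z(I₃) = 0. -/

import Mathlib

namespace Ex1Int

/-- The restricted total derivative of the ODE `u₃ = u₂²(u₁² - 2uu₂)/u₁⁴`, as the
vector field `Z = ∂_x + u₁∂_u + u₂∂_{u₁} + (u₂²(u₁² - 2uu₂)/u₁⁴)∂_{u₂}` on coordinates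
`p = (x, u, u₁, u₂)`. -/
noncomputable def Z (p : Fin 4 → ℝ) : Fin 4 → ℝ :=
  ![1, p 2, p 3, (p 3) ^ 2 * ((p 2) ^ 2 - 2 * p 1 * p 3) / (p 2) ^ 4]

/-- `I₃ = 1/u₁ + ln(u₂/(2uu₂ - u₁²))`. -/
noncomputable def I₃ (p : Fin 4 → ℝ) : ℝ :=
  1 / p 2 + Real.log (p 3 / (2 * p 1 * p 3 - (p 2) ^ 2))

end Ex1Int

open Ex1Int in
/-- `I₃ = 1/u₁ + ln(u₂/(2uu₂ - u₁²))` is a first integral of `Z` on the region where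
`u₁ ≠ 0` and `u₂/(2uu₂ - u₁²) > 0`: `Z(I₃) = 0`. -/
theorem stmt_14 (p : Fin 4 → ℝ) (hu₁ : p 2 ≠ 0)
    (harg : p 3 / (2 * p 1 * p 3 - (p 2) ^ 2) > 0) :
    fderiv ℝ I₃ p (Z p) = 0 := by
  have hratio : p 3 / (2 * p 1 * p 3 - (p 2) ^ 2) ≠ 0 := ne_of_gt harg
  rw [div_ne_zero_iff] at hratio
  obtain ⟨h3, hden⟩ := hratio
  -- rewrite I₃ as a difference of logs near p
  have c3 : ContinuousAt (fun q : Fin 4 → ℝ => q 3) p := (continuous_apply 3).continuousAt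
  have cden : ContinuousAt (fun q : Fin 4 → ℝ => 2 * q 1 * q 3 - (q 2) ^ 2) p := by
    fun_prop
  have heq : I₃ =ᶠ[nhds p]
      fun q => (q 2)⁻¹ + (Real.log (q 3) - Real.log (2 * q 1 * q 3 - (q 2) ^ 2)) := by
    filter_upwards [c3.eventually_ne h3, cden.eventually_ne hden] with q hq3 hqden
    simp [I₃, Real.log_div hq3 hqden, one_div]
  rw [heq.fderiv_eq]
  have H1 := hasFDerivAt_apply (𝕜 := ℝ) (1 : Fin 4) p
  have H2 := hasFDerivAt_apply (𝕜 := ℝ) (2 : Fin 4) p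
  have H3 := hasFDerivAt_apply (𝕜 := ℝ) (3 : Fin 4) p
  have Hinv := (hasDerivAt_inv hu₁).comp_hasFDerivAt p H2
  have Hlog3 := H3.log h3
  have Hden := ((H1.const_mul 2).mul H3).sub ((hasDerivAt_pow 2 (p 2)).comp_hasFDerivAt p H2)
  have Hlogden := Hden.log hden
  have H := Hinv.add (Hlog3.sub Hlogden)
  simp only [Function.comp_def, Pi.add_def, Pi.sub_def, Pi.mul_def] at H
  rw [H.fderiv]
  simp only [ContinuousLinearMap.add_apply, ContinuousLinearMap.sub_apply,
    ContinuousLinearMap.smul_apply, ContinuousLinearMap.coe_smul', Pi.smul_apply,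
    ContinuousLinearMap.proj_apply, smul_eq_mul, ContinuousLinearMap.neg_apply]
  show _ = (0 : ℝ)
  simp [Z]
  have hden' : p 3 * p 1 * 2 - p 2 ^ 2 ≠ 0 := by intro h; apply hden; linarith
  field_simp
  ring_nf
  field_simp
  ring
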